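/- Let $(\Omega,\mathcal F,\mu)$ be a probability space, $T:\Omega\to\Omega$ an ergodic measure-preserving map, and $A,B:\Omega\to\mathbb R$ measurable such that $\prod_{i=0}^{n-1}|A(T^i\omega)|\to 0$ as $n\to\infty$ for $\mu$-almost every $\omega$. If $X,X':\Omega\to\mathbb R$ are measurable functions both satisfying $X(T\omega)=A(T\omega)|X(\omega)|+B(T\omega)$ and $X'(T\omega)=A(T\omega)|X'(\omega)|+B(T\omega)$ for $\mu$-almost every $\omega$, then $X=X'$ $\mu$-almost everywhere. -/
import Mathlib


open MeasureTheory Filter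

/-- Uniqueness of stationary solutions of the stochastic recurrence equation with
absolute value: if the products `∏_{i<n} |A (Tⁱ ω)|` tend to `0` almost surely, then any
two measurable solutions of `X ∘ T = (A ∘ T) * |X| + B ∘ T` (a.e.) agree almost
everywhere. -/
theorem abs_sre_stationary_solution_unique
    {Ω : Type*} [MeasurableSpace Ω] (μ : Measure Ω) [IsProbabilityMeasure μ]
    (T : Ω → Ω) (hT : Ergodic T μ)
    (A B : Ω → ℝ) (hA : Measurable A) (hB : Measurable B)
    (hprod : ∀ᵐ ω ∂μ, Tendsto (fun n => ∏ i ∈ Finset.range n, |A (T^[i] ω)|)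
      atTop (nhds 0))
    (X X' : Ω → ℝ) (hX : Measurable X) (hX' : Measurable X')
    (hXeq : ∀ᵐ ω ∂μ, X (T ω) = A (T ω) * |X ω| + B (T ω))
    (hX'eq : ∀ᵐ ω ∂μ, X' (T ω) = A (T ω) * |X' ω| + B (T ω)) :
    X =ᵐ[μ] X' := by
  have hmp : MeasurePreserving T μ μ := hT.toMeasurePreserving
  set D : Ω → ℝ := fun ω => |X ω - X' ω| with hD
  -- iterated recurrence hypotheses
  have hXit : ∀ᵐ ω ∂μ, ∀ n : ℕ, X (T (T^[n] ω)) = A (T (T^[n] ω)) * |X (T^[n] ω)| + B (T (T^[n] ω)) :=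
    ae_all_iff.2 fun n => (hmp.iterate n).quasiMeasurePreserving.ae hXeq
  have hX'it : ∀ᵐ ω ∂μ, ∀ n : ℕ, X' (T (T^[n] ω)) = A (T (T^[n] ω)) * |X' (T^[n] ω)| + B (T (T^[n] ω)) :=
    ae_all_iff.2 fun n => (hmp.iterate n).quasiMeasurePreserving.ae hX'eq
  have hprod' : ∀ᵐ ω ∂μ, Tendsto (fun n => ∏ i ∈ Finset.range n, |A (T^[i] (T ω))|)
      atTop (nhds 0) := hmp.quasiMeasurePreserving.ae hprod
  -- a.e., D ∘ T^[n] → 0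
  have hten : ∀ᵐ ω ∂μ, Tendsto (fun n => D (T^[n] ω)) atTop (nhds 0) := by
    filter_upwards [hXit, hX'it, hprod'] with ω h1 h2 h3
    have key : ∀ n : ℕ, D (T^[n] ω) ≤ (∏ i ∈ Finset.range n, |A (T^[i] (T ω))|) * D ω := by
      intro n
      induction n with
      | zero => simp [hD]
      | succ n ih =>
        have hstep : D (T^[n + 1] ω) ≤ |A (T (T^[n] ω))| * D (T^[n] ω) := by
          rw [Function.iterate_succ_apply']
          show |X (T (T^[n] ω)) - X' (T (T^[n] ω))| ≤ _
          calc |X (T (T^[n] ω)) - X' (T (T^[n] ω))|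
              = |A (T (T^[n] ω))| * abs (|X (T^[n] ω)| - |X' (T^[n] ω)|) := by
                rw [h1 n, h2 n, ← abs_mul]; ring_nf
            _ ≤ |A (T (T^[n] ω))| * |X (T^[n] ω) - X' (T^[n] ω)| := by
                exact mul_le_mul_of_nonneg_left
                  (abs_abs_sub_abs_le_abs_sub _ _) (abs_nonneg _)
        calc D (T^[n + 1] ω) ≤ |A (T (T^[n] ω))| * D (T^[n] ω) := hstep
          _ ≤ |A (T (T^[n] ω))| * ((∏ i ∈ Finset.range n, |A (T^[i] (T ω))|) * D ω) := by
              exact mul_le_mul_of_nonneg_left ih (abs_nonneg _)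
          _ = (∏ i ∈ Finset.range (n + 1), |A (T^[i] (T ω))|) * D ω := by
              rw [Finset.prod_range_succ, ← Function.iterate_succ_apply,
                Function.iterate_succ_apply']
              ring
    have hlim : Tendsto (fun n => (∏ i ∈ Finset.range n, |A (T^[i] (T ω))|) * D ω)
        atTop (nhds 0) := by
      simpa using h3.mul_const (D ω)
    exact squeeze_zero (fun n => abs_nonneg _) key hlim
  -- recurrence to the sets {D ≥ 1/(k+1)}
  have hmeasD : Measurable D := (hX.sub hX').abs
  have hsmall : ∀ᵐ ω ∂μ, ∀ k : ℕ, D ω < 1 / (k + 1) := by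
    rw [ae_all_iff]
    intro k
    have hs : MeasurableSet {ω | 1 / ((k : ℝ) + 1) ≤ D ω} :=
      measurableSet_le measurable_const hmeasD
    have hrec := (hmp.conservative).ae_mem_imp_frequently_image_mem hs.nullMeasurableSet
    filter_upwards [hrec, hten] with ω hω htω
    by_contra h
    push_neg at h
    have hfreq := hω h
    have hev : ∀ᶠ n in atTop, D (T^[n] ω) < 1 / ((k : ℝ) + 1) := by
      have hpos : (0 : ℝ) < 1 / ((k : ℝ) + 1) := by positivity
      exact htω.eventually (gt_mem_nhds hpos)
    rcases (hfreq.and_eventually hev).exists with ⟨n, hn1, hn2⟩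
    exact absurd hn1 (not_le.2 hn2)
  filter_upwards [hsmall] with ω hω
  have : D ω ≤ 0 := by
    by_contra h
    push_neg at h
    obtain ⟨k, hk⟩ := exists_nat_one_div_lt h
    exact absurd (hω k) (not_lt.2 (le_of_lt hk))
  have : D ω = 0 := le_antisymm this (abs_nonneg _)
  have := abs_eq_zero.mp this
  linarith
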